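/- Let G be a finite abelian group, f: G → ℂ a function, and T ⊆ G. Then Σ_{t∈T} f(x−t) = (Σ_{x∈G} f(x))·(#T)/(#G) for all x ∈ G if and only if for every nontrivial character ξ ∈ Ĝ, either f̂(ξ) = 0 or χ̂_T(ξ) = 0. -/
import Mathlib


open scoped BigOperators

lemma stmt2_key (G : Type*) [AddCommGroup G] [Fintype G]
    (f : G → ℂ) (T : Finset G) (ξ : AddChar G ℂ) :
    ∑ x : G, (∑ t ∈ T, f (x - t)) * ξ x =
      (∑ x : G, f x * ξ x) * (∑ t ∈ T, ξ t) := by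
  simp_rw [Finset.sum_mul, Finset.mul_sum, Finset.sum_comm (s := Finset.univ)]
  refine Finset.sum_congr rfl fun t _ => ?_
  rw [← Equiv.sum_comp (Equiv.addRight t) (fun x => f (x - t) * ξ x)]
  simp [AddChar.map_add_eq_mul, mul_comm, mul_left_comm]

/-- For `f : G → ℂ` on a finite abelian group and `T ⊆ G`, the function
`x ↦ ∑_{t∈T} f(x-t)` is identically equal to `(∑_x f x) · #T / #G` iff for every
nontrivial character `ξ` of `G` either `f̂(ξ) = 0` or `χ̂_T(ξ) = 0`. -/
theorem stmt2 (G : Type*) [AddCommGroup G] [Fintype G]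
    (f : G → ℂ) (T : Finset G) :
    (∀ x : G, ∑ t ∈ T, f (x - t) =
        (∑ y : G, f y) * (T.card : ℂ) / (Fintype.card G : ℂ)) ↔
    (∀ ξ : AddChar G ℂ, ξ ≠ 1 →
      (∑ x : G, f x * ξ x = 0) ∨ (∑ t ∈ T, ξ t = 0)) := by
  classical
  have hcard : (Fintype.card G : ℂ) ≠ 0 := Nat.cast_ne_zero.2 Fintype.card_ne_zero
  constructor
  · intro h ξ hξ
    have hξ0 : ξ ≠ 0 := hξ
    have hsum : ∑ x : G, ξ x = 0 := AddChar.sum_eq_zero_iff_ne_zero.2 hξ0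
    have := stmt2_key G f T ξ
    simp_rw [h] at this
    rw [← Finset.mul_sum, hsum, mul_zero] at this
    exact mul_eq_zero.mp this.symm
  · intro h x
    set c : ℂ := (∑ y : G, f y) * (T.card : ℂ) / (Fintype.card G : ℂ) with hc
    set g : G → ℂ := fun x => (∑ t ∈ T, f (x - t)) - c with hg
    -- all Fourier coefficients of g vanish
    have hcoef : ∀ ξ : AddChar G ℂ, ∑ y : G, g y * ξ y = 0 := by
      intro ξ
      by_cases hξ : ξ = 1
      · subst hξ
        simp only [hg, AddChar.one_apply, mul_one, Finset.sum_sub_distrib]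
        have h1 : ∑ y : G, ∑ t ∈ T, f (y - t) = (∑ y : G, f y) * (T.card : ℂ) := by
          rw [Finset.sum_comm]
          have : ∀ t ∈ T, ∑ y : G, f (y - t) = ∑ y : G, f y := fun t _ =>
            (Equiv.subRight t).sum_comp (fun y => f y)
          rw [Finset.sum_congr rfl this, Finset.sum_const, nsmul_eq_mul, mul_comm]
        rw [h1, Finset.sum_const, Finset.card_univ, nsmul_eq_mul, hc,
          mul_comm ((Fintype.card G : ℂ)) _, div_mul_cancel₀ _ hcard, sub_self]
      · have hmul := stmt2_key G f T ξ
        have := h ξ hξ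
        have hξ0 : ξ ≠ 0 := hξ
        have hsum : ∑ y : G, ξ y = 0 := AddChar.sum_eq_zero_iff_ne_zero.2 hξ0
        simp only [hg, sub_mul, Finset.sum_sub_distrib, hmul, ← Finset.mul_sum, hsum,
          mul_zero, sub_zero]
        rcases this with h0 | h0 <;> simp [h0]
    -- inversion: g = 0
    have hinv : ∀ z : G, g z * (Fintype.card G : ℂ) = 0 := by
      intro z
      have := Finset.sum_congr rfl fun (ξ : AddChar G ℂ) (_ : ξ ∈ Finset.univ) =>
        congrArg (· * ξ (-z)) (hcoef ξ)
      simp only [zero_mul, Finset.sum_const_zero] at this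
      rw [Finset.sum_congr rfl (fun (ξ : AddChar G ℂ) _ => by
        rw [Finset.sum_mul]), Finset.sum_comm] at this
      have key : ∀ y : G, ∑ ξ : AddChar G ℂ, g y * ξ y * ξ (-z)
          = g y * if y - z = 0 then (Fintype.card G : ℂ) else 0 := by
        intro y
        simp_rw [mul_assoc, ← Finset.mul_sum, ← AddChar.map_add_eq_mul]
        congr 1
        have := AddChar.sum_apply_eq_ite (α := G) (y - z)
        simpa [sub_eq_add_neg] using this
      rw [Finset.sum_congr rfl fun y _ => key y] at this
      have : ∑ y : G, g y * (if y - z = 0 then (Fintype.card G : ℂ) else 0) = 0 := this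
      rwa [Finset.sum_eq_single z (fun y _ hy => by simp [sub_eq_zero, hy])
        (fun hz => absurd (Finset.mem_univ z) hz), sub_self, if_pos rfl] at this
    have := hinv x
    have hgx : g x = 0 := by
      rcases mul_eq_zero.mp this with h0 | h0
      · exact h0
      · exact absurd h0 hcard
    exact sub_eq_zero.mp hgx
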